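/- Let q be a complex number with |q| = 1 and let V₁, V₂ be isometries on a complex Hilbert space H satisfying V₂V₁* = q V₁*V₂. Then V₁V₂ = q V₂V₁; in particular (V₁,V₂) is doubly q-commutative. -/

import Mathlib

open ContinuousLinearMap

lemma aux_ring {R : Type*} [Ring R] [Module ℂ R] [SMulCommClass ℂ R R]
    [IsScalarTower ℂ R R] (q : ℂ) (hqq : (starRingEnd ℂ) q * q = 1)
    (a b a' b' : R) (h1 : a' * a = 1) (h2 : b' * b = 1)
    (h3 : b * a' = q • (a' * b)) (h4 : a * b' = ((starRingEnd ℂ) q) • (b' * a)) :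
    (b' * a' - ((starRingEnd ℂ) q) • (a' * b')) * (a * b - q • (b * a)) = 0 := by
  have h3' : a' * b = ((starRingEnd ℂ) q) • (b * a') := by
    rw [h3, smul_smul, hqq, one_smul]
  have h4' : b' * a = q • (a * b') := by
    rw [h4, smul_smul, mul_comm, hqq, one_smul]
  have hqq' : q * (starRingEnd ℂ) q = 1 := by rw [mul_comm]; exact hqq
  rw [sub_mul, mul_sub, mul_sub, smul_mul_assoc, smul_mul_assoc,
    mul_smul_comm, mul_smul_comm, smul_smul, hqq]
  have t1 : b' * a' * (a * b) = 1 := by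
    rw [show b' * a' * (a * b) = b' * (a' * a) * b by noncomm_ring, h1, mul_one, h2]
  have t2 : b' * a' * (b * a) = ((starRingEnd ℂ) q) • 1 := by
    rw [show b' * a' * (b * a) = b' * (a' * b) * a by noncomm_ring, h3',
      mul_smul_comm, smul_mul_assoc,
      show b' * (b * a') * a = b' * b * (a' * a) by noncomm_ring, h1, h2, mul_one]
  have t3 : a' * b' * (a * b) = q • 1 := by
    rw [show a' * b' * (a * b) = a' * (b' * a) * b by noncomm_ring, h4',
      mul_smul_comm, smul_mul_assoc,
      show a' * (a * b') * b = a' * a * (b' * b) by noncomm_ring, h1, h2, mul_one]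
  have t4 : a' * b' * (b * a) = 1 := by
    rw [show a' * b' * (b * a) = a' * (b' * b) * a by noncomm_ring, h2, mul_one, h1]
  rw [t1, t2, t3, t4]
  simp [smul_smul, hqq, hqq']

theorem stmt_3 {H : Type*} [NormedAddCommGroup H] [InnerProductSpace ℂ H] [CompleteSpace H]
    (q : ℂ) (hq : ‖q‖ = 1) (V₁ V₂ : H →L[ℂ] H)
    (hV₁ : adjoint V₁ ∘L V₁ = 1) (hV₂ : adjoint V₂ ∘L V₂ = 1)
    (h : V₂ ∘L adjoint V₁ = q • (adjoint V₁ ∘L V₂)) :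
    V₁ ∘L V₂ = q • (V₂ ∘L V₁) ∧
    -- in particular, (V₁, V₂) is doubly q-commutative
    (V₁ ∘L V₂ = q • (V₂ ∘L V₁) ∧ V₂ ∘L adjoint V₁ = q • (adjoint V₁ ∘L V₂)) := by
  have hqq : (starRingEnd ℂ) q * q = 1 := by
    rw [← Complex.normSq_eq_conj_mul_self]
    norm_cast
    simp [Complex.normSq_eq_norm_sq, hq]
  have hV₁' : star V₁ * V₁ = 1 := by rwa [star_eq_adjoint, mul_def]
  have hV₂' : star V₂ * V₂ = 1 := by rwa [star_eq_adjoint, mul_def]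
  have h' : V₂ * star V₁ = q • (star V₁ * V₂) := by
    rwa [star_eq_adjoint, mul_def, mul_def]
  have h'' : V₁ * star V₂ = ((starRingEnd ℂ) q) • (star V₂ * V₁) := by
    have := congrArg star h'
    rw [star_mul, star_star, star_smul, star_mul, star_star] at this
    simpa only [starRingEnd_apply] using this
  have key : star (V₁ * V₂ - q • (V₂ * V₁)) * (V₁ * V₂ - q • (V₂ * V₁)) = 0 := by
    rw [star_sub, star_mul, star_smul, star_mul]
    simpa only [starRingEnd_apply] using
      aux_ring q hqq V₁ V₂ (star V₁) (star V₂) hV₁' hV₂' h' h''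
  have hT : V₁ * V₂ - q • (V₂ * V₁) = 0 := by
    rwa [CStarRing.star_mul_self_eq_zero_iff] at key
  have main : V₁ ∘L V₂ = q • (V₂ ∘L V₁) := by
    rw [← mul_def, ← mul_def]
    exact sub_eq_zero.mp hT
  exact ⟨main, main, h⟩
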